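/- Let q be an odd prime power and F a finite field with q elements. For each α, β ∈ F define L(α, β) = (α² - 4β)^{(q-1)/2} ∈ F (the Legendre symbol of the discriminant of X² - αX + β). Then for every integer m with 1 ≤ m ≤ q - 1, the sum over all α, β ∈ F^× of L(α, β) · (α^{-2} β)^m equals (-1)^{(q-1)/2} · 4^{-m} · C(m, (q-1)/2) as elements of F. -/

import Mathlib

open Finset

private lemma sum_pow_all {F : Type*} [Field F] [Fintype F] [DecidableEq F] {n : ℕ}
    (hn : n ≠ 0) :
    ∑ x : F, x ^ n = if (Fintype.card F - 1) ∣ n then (-1 : F) else 0 := by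
  rw [← FiniteField.sum_pow_units F n]
  let φ : Fˣ ↪ F := ⟨fun x ↦ x, fun _ _ h => Units.ext h⟩
  have hmap : Finset.univ.map φ = Finset.univ \ {0} := by
    ext x
    simp only [Finset.mem_map, Finset.mem_univ, Function.Embedding.coeFn_mk, true_and,
      Finset.mem_sdiff, Finset.mem_singleton, φ]
    exact isUnit_iff_ne_zero
  calc ∑ x : F, x ^ n = ∑ x ∈ Finset.univ \ {0}, x ^ n := by
        refine (Finset.sum_subset (Finset.sdiff_subset) ?_).symm
        intro x _ hx
        have hx0 : x = 0 := by
          by_contra h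
          exact hx (Finset.mem_sdiff.mpr ⟨Finset.mem_univ x, by simpa using h⟩)
        rw [hx0, zero_pow hn]
    _ = ∑ x ∈ Finset.univ.map φ, x ^ n := by rw [hmap]
    _ = ∑ x : Fˣ, ((x : F)) ^ n := Finset.sum_map _ _ _

open scoped Classical in
/-- Let `F` be a finite field of odd cardinality `q`, and for `α, β ∈ F` let
`L(α, β) = (α² - 4β)^{(q-1)/2}`. Then for `1 ≤ m ≤ q - 1`,
`∑_{α, β ∈ Fˣ} L(α, β) (α⁻² β)^m = (-1)^{(q-1)/2} · 4^{-m} · C(m, (q-1)/2)` in `F`. -/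
theorem stmt9 (F : Type*) [Field F] [Fintype F] (q : ℕ) (hq : Fintype.card F = q)
    (hodd : Odd q) (m : ℕ) (hm1 : 1 ≤ m) (hm2 : m ≤ q - 1) :
    ∑ α ∈ Finset.univ.filter (fun α : F => α ≠ 0),
      ∑ β ∈ Finset.univ.filter (fun β : F => β ≠ 0),
        (α ^ 2 - 4 * β) ^ ((q - 1) / 2) * ((α ^ 2)⁻¹ * β) ^ m
      = (-1 : F) ^ ((q - 1) / 2) * ((4 : F) ^ m)⁻¹ * (Nat.choose m ((q - 1) / 2) : F) := by
  obtain ⟨r, hr⟩ := hodd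
  have hq2 : 2 ≤ q := hq ▸ Fintype.one_lt_card
  set k := (q - 1) / 2 with hkdef
  have hkk : 2 * k = q - 1 := by omega
  have hk1 : 1 ≤ k := by omega
  have hq0 : (q : F) = 0 := by rw [← hq]; exact FiniteField.cast_card_eq_zero F
  have h2 : (2 : F) ≠ 0 := by
    intro h
    have hdvd : ringChar F ∣ 2 := ringChar.dvd (by exact_mod_cast h)
    have hchar : ringChar F = 2 :=
      (Nat.prime_two.eq_one_or_self_of_dvd _ hdvd).resolve_left CharP.ringChar_ne_one
    have := FiniteField.even_card_of_char_two hchar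
    omega
  have h4 : (4 : F) ≠ 0 := by
    have h42 : (4 : F) = 2 * 2 := by norm_num
    rw [h42]; exact mul_ne_zero h2 h2
  have hsum : ∀ n : ℕ, n ≠ 0 → ∑ x : F, x ^ n = if (q - 1) ∣ n then (-1 : F) else 0 := by
    intro n hn
    rw [sum_pow_all hn, hq]
  -- Step 1: the inner sum does not depend on `α`.
  have hinner : ∀ α : F, α ≠ 0 →
      ∑ β ∈ Finset.univ.filter (fun β : F => β ≠ 0),
        (α ^ 2 - 4 * β) ^ k * ((α ^ 2)⁻¹ * β) ^ m
      = ∑ γ ∈ Finset.univ.filter (fun γ : F => γ ≠ 0), (1 - 4 * γ) ^ k * γ ^ m := by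
    intro α hα
    have hα2 : α ^ 2 ≠ 0 := pow_ne_zero _ hα
    have hpow : (α ^ 2) ^ k = 1 := by
      rw [← pow_mul, hkk, ← hq]
      exact FiniteField.pow_card_sub_one_eq_one α hα
    refine (Finset.sum_equiv (Equiv.mulLeft₀ (α ^ 2) hα2) ?_ ?_).symm
    · intro γ
      simp [Equiv.mulLeft₀_apply, hα2]
    · intro γ hγ
      simp only [Equiv.mulLeft₀_apply]
      have h1 : α ^ 2 - 4 * (α ^ 2 * γ) = α ^ 2 * (1 - 4 * γ) := by ring
      have h2' : (α ^ 2)⁻¹ * (α ^ 2 * γ) = γ := by field_simp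
      rw [h1, h2', mul_pow, hpow, one_mul]
  rw [Finset.sum_congr rfl (fun α hα => hinner α (Finset.mem_filter.mp hα).2),
    Finset.sum_const]
  have hcard : (Finset.univ.filter (fun α : F => α ≠ 0)).card = q - 1 := by
    rw [Finset.filter_ne', Finset.card_erase_of_mem (Finset.mem_univ 0), Finset.card_univ, hq]
  rw [hcard, nsmul_eq_mul]
  have hcast : ((q - 1 : ℕ) : F) = -1 := by
    rw [Nat.cast_sub (by omega), hq0, Nat.cast_one, zero_sub]
  rw [hcast]
  -- Step 2: rescale `γ = 4⁻¹ δ` and substitute `δ ↦ 1 - δ`.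
  have hS : ∑ γ ∈ Finset.univ.filter (fun γ : F => γ ≠ 0), (1 - 4 * γ) ^ k * γ ^ m
      = ((4 : F) ^ m)⁻¹ * ∑ δ : F, δ ^ k * (1 - δ) ^ m := by
    calc ∑ γ ∈ Finset.univ.filter (fun γ : F => γ ≠ 0), (1 - 4 * γ) ^ k * γ ^ m
        = ∑ δ ∈ Finset.univ.filter (fun δ : F => δ ≠ 0), (1 - δ) ^ k * ((4 : F)⁻¹ * δ) ^ m := by
          refine Finset.sum_equiv (Equiv.mulLeft₀ (4 : F) h4) ?_ ?_
          · intro γ; simp [Equiv.mulLeft₀_apply, h4]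
          · intro γ hγ
            simp only [Equiv.mulLeft₀_apply]
            have : (4 : F)⁻¹ * (4 * γ) = γ := by field_simp
            rw [this]
      _ = ∑ δ : F, (1 - δ) ^ k * ((4 : F)⁻¹ * δ) ^ m := by
          refine Finset.sum_subset (Finset.filter_subset _ _) ?_
          intro δ _ hδ
          have : δ = 0 := by simpa using hδ
          subst this
          simp [zero_pow (by omega : m ≠ 0)]
      _ = ((4 : F) ^ m)⁻¹ * ∑ δ : F, (1 - δ) ^ k * δ ^ m := by
          rw [Finset.mul_sum]
          refine Finset.sum_congr rfl fun δ _ => ?_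
          rw [mul_pow, inv_pow]
          ring
      _ = ((4 : F) ^ m)⁻¹ * ∑ δ : F, δ ^ k * (1 - δ) ^ m := by
          congr 1
          refine Finset.sum_equiv (Equiv.subLeft (1 : F)) (by simp) ?_
          intro δ _
          simp only [Equiv.subLeft_apply]
          rw [sub_sub_cancel]
  rw [hS]
  -- Step 3: evaluate `∑ δ, δ ^ k * (1 - δ) ^ m`.
  have hT : ∑ δ : F, δ ^ k * (1 - δ) ^ m = (-1 : F) ^ k * (-1) * (Nat.choose m k : F) := by
    have hexp : ∀ δ : F, δ ^ k * (1 - δ) ^ m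
        = ∑ j ∈ Finset.range (m + 1),
            (-1 : F) ^ (j + m) * (Nat.choose m j : F) * δ ^ (k + (m - j)) := by
      intro δ
      rw [sub_pow, Finset.mul_sum]
      refine Finset.sum_congr rfl fun j hj => ?_
      rw [pow_add]
      ring
    rw [Finset.sum_congr rfl fun δ _ => hexp δ, Finset.sum_comm]
    have hval : ∀ j ∈ Finset.range (m + 1),
        ∑ δ : F, (-1 : F) ^ (j + m) * (Nat.choose m j : F) * δ ^ (k + (m - j))
        = (-1 : F) ^ (j + m) * (Nat.choose m j : F)
            * (if (q - 1) ∣ (k + (m - j)) then (-1 : F) else 0) := by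
      intro j hj
      rw [← Finset.mul_sum, hsum _ (by omega)]
    rw [Finset.sum_congr rfl hval]
    rcases le_or_gt k m with hkm | hkm
    · rw [Finset.sum_eq_single (m - k)]
      · have hd : (q - 1) ∣ (k + (m - (m - k))) := by
          have : k + (m - (m - k)) = q - 1 := by omega
          rw [this]
        rw [if_pos hd, Nat.choose_symm hkm]
        have he : m - k + m = k + 2 * (m - k) := by omega
        rw [he, pow_add, pow_mul, neg_one_sq, one_pow, mul_one]
        ring
      · intro j hj hne
        have hj' : j ≤ m := by simpa using Nat.lt_succ_iff.mp (Finset.mem_range.mp hj)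
        have hnd : ¬ (q - 1) ∣ (k + (m - j)) := by
          intro hdvd
          have hle := Nat.le_of_dvd (by omega) hdvd
          have hd2 : (q - 1) ∣ (k + (m - j) - (q - 1)) := Nat.dvd_sub hdvd dvd_rfl
          rcases Nat.eq_zero_or_pos (k + (m - j) - (q - 1)) with h0 | hpos
          · omega
          · have := Nat.le_of_dvd hpos hd2
            omega
        rw [if_neg hnd, mul_zero]
      · intro h
        exact absurd (Finset.mem_range.mpr (by omega)) h
    · have hzero : ∀ j ∈ Finset.range (m + 1),
          (-1 : F) ^ (j + m) * (Nat.choose m j : F)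
            * (if (q - 1) ∣ (k + (m - j)) then (-1 : F) else 0) = 0 := by
        intro j hj
        have hj' : j ≤ m := Nat.lt_succ_iff.mp (Finset.mem_range.mp hj)
        have hnd : ¬ (q - 1) ∣ (k + (m - j)) := by
          intro hdvd
          have hle := Nat.le_of_dvd (by omega) hdvd
          have hd2 : (q - 1) ∣ (k + (m - j) - (q - 1)) := Nat.dvd_sub hdvd dvd_rfl
          rcases Nat.eq_zero_or_pos (k + (m - j) - (q - 1)) with h0 | hpos
          · omega
          · have := Nat.le_of_dvd hpos hd2
            omega
        rw [if_neg hnd, mul_zero]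
      rw [Finset.sum_eq_zero hzero, Nat.choose_eq_zero_of_lt hkm]
      simp
  rw [hT]
  ring
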